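/- arXiv:2104.05905 — 4 statements merged into one kernel-verified Lean document; each statement's English description precedes it below -/
import Mathlib

section
/- Assume condition A3 and let g* : S × {1, …, m} → ℝ be any bounded measurable function. Then E[ 1{C = c, A = a} · e_a(X, C)^{-1} · (Y − g*(X, C)) + 1{C = c} · g*(X, C) ] = P[C = c] · φ(c, a). Consequently, the asymptotic limit of the augmented estimator for φ(c, a) equals φ(c, a) even when the limit g* of the outcome-model estimator differs from the true conditional mean g_a; the analysis is robust to outcome-model misspecification. -/
open MeasureTheory ProbabilityTheory

/-- If an arbitrary (not necessarily measurable) predicate on the value of `f` holds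
a.e. on an event `T` which has a.e. nonzero conditional probability given `f`,
then it holds a.e. (unconditionally). -/
lemma aux_ae_of_ae_on_event
    {Ω β : Type*} [MeasurableSpace Ω] [StandardBorelSpace Ω] [Nonempty Ω]
    [MeasurableSpace β] [StandardBorelSpace β]
    (P : Measure Ω) [IsProbabilityMeasure P]
    (f : Ω → β) (hf : Measurable f)
    (T : Set Ω) (hT : MeasurableSet T)
    (hpos : ∀ᵐ ω ∂P, condDistrib id f P (f ω) T ≠ 0)
    (B : Set β)
    (hBT : ∀ᵐ ω ∂P, ω ∈ T → f ω ∉ B) :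
    ∀ᵐ ω ∂P, f ω ∉ B := by
  classical
  set κ := condDistrib id f P with hκ_def
  set ψ : Ω → β × Ω := fun ω => (f ω, ω) with hψ_def
  have hψ : Measurable ψ := hf.prodMk measurable_id
  set ρ : Measure (β × Ω) := P.map ψ with hρ_def
  haveI : IsProbabilityMeasure ρ := Measure.isProbabilityMeasure_map hψ.aemeasurable
  have hκρ : κ = ρ.condKernel := by rw [hκ_def, condDistrib_def]; rfl
  have hfst : ρ.fst = P.map f := by
    rw [hρ_def]
    exact Measure.fst_map_prodMk measurable_id
  obtain ⟨N, hNsub, hNmeas, hNnull⟩ :=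
    exists_measurable_superset_of_null (ae_iff.mp hBT)
  letI := upgradeStandardBorel β
  have hDset : MeasurableSet {p : β × Ω | f p.2 = p.1} :=
    MeasureTheory.StronglyMeasurable.measurableSet_eq_fun
      ((hf.comp measurable_snd).stronglyMeasurable) measurable_fst.stronglyMeasurable
  have hfiber : ∀ᵐ ξ ∂(P.map f), κ ξ {ω | f ω ≠ ξ} = 0 := by
    have h0 : ρ {p : β × Ω | f p.2 = p.1}ᶜ = 0 := by
      rw [hρ_def, Measure.map_apply hψ hDset.compl]
      have : ψ ⁻¹' {p : β × Ω | f p.2 = p.1}ᶜ = ∅ := by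
        ext ω; simp [hψ_def]
      rw [this, measure_empty]
    rw [← ρ.disintegrate ρ.condKernel, Measure.compProd_apply hDset.compl, hfst] at h0
    rw [← hκρ] at h0
    have hmeas : Measurable fun ξ => κ ξ (Prod.mk ξ ⁻¹' {p : β × Ω | f p.2 = p.1}ᶜ) := by
      rw [hκρ]
      exact Kernel.measurable_kernel_prodMk_left hDset.compl
    have := (lintegral_eq_zero_iff hmeas).mp h0
    filter_upwards [this] with ξ hξ
    have hpre : Prod.mk ξ ⁻¹' {p : β × Ω | f p.2 = p.1}ᶜ = {ω | f ω ≠ ξ} := rfl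
    rwa [hpre] at hξ
  have hnull : ∀ᵐ ξ ∂(P.map f), κ ξ N = 0 := by
    have h0 : ρ (Set.univ ×ˢ N) = 0 := by
      rw [hρ_def, Measure.map_apply hψ (MeasurableSet.univ.prod hNmeas)]
      have : ψ ⁻¹' (Set.univ ×ˢ N) = N := by ext ω; simp [hψ_def]
      rw [this]; exact hNnull
    rw [← ρ.disintegrate ρ.condKernel, Measure.compProd_apply
      (MeasurableSet.univ.prod hNmeas), hfst, ← hκρ] at h0
    have hmeas : Measurable fun ξ => κ ξ (Prod.mk ξ ⁻¹' (Set.univ ×ˢ N)) := by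
      rw [hκρ]
      exact Kernel.measurable_kernel_prodMk_left (MeasurableSet.univ.prod hNmeas)
    have := (lintegral_eq_zero_iff hmeas).mp h0
    filter_upwards [this] with ξ hξ
    have hpre : Prod.mk ξ ⁻¹' (Set.univ ×ˢ N) = N := by ext ω; simp
    rwa [hpre] at hξ
  have hpos' : ∀ᵐ ξ ∂(P.map f), κ ξ T ≠ 0 := by
    have hms : MeasurableSet {ξ : β | κ ξ T ≠ 0} :=
      (Kernel.measurable_coe κ hT (measurableSet_singleton 0)).compl
    rw [ae_map_iff hf.aemeasurable hms]
    exact hpos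
  have hgood : ∀ᵐ ξ ∂(P.map f), ξ ∉ B := by
    filter_upwards [hfiber, hnull, hpos'] with ξ h1 h2 h3
    intro hξB
    apply h3
    have hsub : T ⊆ N ∪ {ω | f ω ≠ ξ} := by
      intro ω hωT
      by_cases hfe : f ω = ξ
      · left
        refine hNsub ?_
        simp only [Set.mem_setOf_eq]
        intro h
        exact (h hωT) (by rw [hfe]; exact hξB)
      · right; exact hfe
    refine le_antisymm ?_ zero_le
    calc κ ξ T ≤ κ ξ (N ∪ {ω | f ω ≠ ξ}) := measure_mono hsub
      _ ≤ κ ξ N + κ ξ {ω | f ω ≠ ξ} := measure_union_le _ _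
      _ = 0 := by rw [h1, h2, add_zero]
  exact ae_of_ae_map hf.aemeasurable hgood

/-- The σ-algebra generated by `(X, C)`. -/
def mXC {Ω S F : Type*} [MeasurableSpace S] [MeasurableSpace F]
    (X : Ω → S) (C : Ω → F) : MeasurableSpace Ω :=
  MeasurableSpace.comap (fun ω => (X ω, C ω)) inferInstance

/-- The σ-algebra generated by `(X, C, A)`. -/
def mXCA {Ω S F G : Type*} [MeasurableSpace S] [MeasurableSpace F] [MeasurableSpace G]
    (X : Ω → S) (C : Ω → F) (A : Ω → G) : MeasurableSpace Ω :=
  MeasurableSpace.comap (fun ω => (X ω, C ω, A ω)) inferInstance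

/-- Under positivity (A3), for any bounded measurable outcome-model
limit `g* : S × {1, …, m} → ℝ`,
`E[ 1{C = c, A = a} e_a(X, C)⁻¹ (Y − g*(X, C)) + 1{C = c} g*(X, C) ]
  = P[C = c] · φ(c, a)`;
hence the asymptotic limit of the augmented estimator for `φ(c, a)` equals `φ(c, a)`
even when `g*` differs from the true conditional outcome mean `g_a`: the analysis is
robust to outcome-model misspecification. -/
theorem augmented_estimator_phi_robust_to_outcome_model_misspecification
    {Ω S 𝒜 : Type*} [MeasurableSpace Ω] [StandardBorelSpace Ω] [Nonempty Ω]
    [MeasurableSpace S] [StandardBorelSpace S]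
    [MeasurableSpace 𝒜] [MeasurableSingletonClass 𝒜] [Fintype 𝒜]
    {m : ℕ}
    (P : Measure Ω) [IsProbabilityMeasure P]
    (X : Ω → S) (C : Ω → Fin m) (A : Ω → 𝒜) (Y : Ω → ℝ)
    (hX : Measurable X) (hC : Measurable C) (hA : Measurable A)
    (hY : Integrable Y P)
    (hCpos : ∀ c' : Fin m, 0 < P {ω | C ω = c'})
    -- g a x c is a version of E[Y | X = x, C = c, A = a]
    (g : S → Fin m → 𝒜 → ℝ)
    (hg : (fun ω => g (X ω) (C ω) (A ω))
        =ᵐ[P] P[Y | MeasurableSpace.comap (fun ω => (X ω, C ω, A ω)) inferInstance])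
    -- e x c a is a version of P[A = a | X = x, C = c]
    (e : S → Fin m → 𝒜 → ℝ)
    (he : ∀ a : 𝒜, (fun ω => e (X ω) (C ω) a)
        =ᵐ[P] P[({ω' | A ω' = a}.indicator (fun _ => (1 : ℝ))) |
            MeasurableSpace.comap (fun ω => (X ω, C ω)) inferInstance])
    -- A3: positivity of treatment assignment
    (hA3 : ∀ a : 𝒜, ∀ᵐ ω ∂P, 0 < e (X ω) (C ω) a)
    -- fixed center and treatment
    (c : Fin m) (a : 𝒜)
    -- g* : arbitrary bounded measurable outcome-model limit
    (gs : S → Fin m → ℝ)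
    (hgs_meas : Measurable fun q : S × Fin m => gs q.1 q.2)
    (hgs_bdd : ∃ M : ℝ, ∀ (x : S) (c' : Fin m), |gs x c'| ≤ M)
    -- the inverse-probability-weighted term has a well-defined expectation
    (hint : Integrable (fun ω =>
        ({ω' | C ω' = c ∧ A ω' = a}.indicator (fun _ => (1 : ℝ)) ω)
          * (e (X ω) (C ω) a)⁻¹ * (Y ω - gs (X ω) (C ω))) P) :
    ∫ ω, (({ω' | C ω' = c ∧ A ω' = a}.indicator (fun _ => (1 : ℝ)) ω)
            * (e (X ω) (C ω) a)⁻¹ * (Y ω - gs (X ω) (C ω))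
          + ({ω' | C ω' = c}.indicator (fun _ => (1 : ℝ)) ω) * gs (X ω) (C ω)) ∂P
      = (P {ω | C ω = c}).toReal * ∫ ω, g (X ω) c a ∂(P[|{ω | C ω = c}]) := by
  classical
  obtain ⟨M0, hM0⟩ := hgs_bdd
  -- basic objects
  set T : Set Ω := {ω' | A ω' = a} with hT_def
  set sC : Set Ω := {ω' | C ω' = c} with hsC_def
  set sT : Set Ω := {ω' | C ω' = c ∧ A ω' = a} with hsT_def
  have hT : MeasurableSet T := hA (measurableSet_singleton a)
  have hsCm : MeasurableSet sC := hC (measurableSet_singleton c)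
  have hsT_eq : sT = sC ∩ T := rfl
  set f : Ω → S × Fin m := fun ω => (X ω, C ω) with hf_def
  set f₃ : Ω → S × Fin m × 𝒜 := fun ω => (X ω, C ω, A ω) with hf3_def
  have hf : Measurable f := hX.prodMk hC
  have hf₃ : Measurable f₃ := hX.prodMk (hC.prodMk hA)
  replace hg : (fun ω => g (X ω) (C ω) (A ω)) =ᵐ[P] P[Y | mXCA X C A] := hg
  replace he : ∀ a' : 𝒜, (fun ω => e (X ω) (C ω) a')
      =ᵐ[P] P[({ω' | A ω' = a'}.indicator (fun _ => (1 : ℝ))) | mXC X C] := he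
  have hm2 : mXC X C ≤ ‹MeasurableSpace Ω› := by
    rw [mXC]; exact hf.comap_le
  have hm3 : mXCA X C A ≤ ‹MeasurableSpace Ω› := by
    rw [mXCA]; exact hf₃.comap_le
  have hm23 : mXC X C ≤ mXCA X C A := by
    rw [mXC, mXCA]
    rintro t ⟨u, hu, rfl⟩
    exact ⟨(fun p : S × Fin m × 𝒜 => (p.1, p.2.1)) ⁻¹' u,
      (measurable_fst.prodMk (measurable_fst.comp measurable_snd)) hu, rfl⟩
  have hf_m2 : Measurable[mXC X C] f := by
    rw [mXC]; exact Measurable.of_comap_le le_rfl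
  have hT3 : MeasurableSet[mXCA X C A] T := by
    rw [mXCA]
    refine ⟨(Set.univ : Set S) ×ˢ ((Set.univ : Set (Fin m)) ×ˢ ({a} : Set 𝒜)),
      MeasurableSet.univ.prod (MeasurableSet.univ.prod (measurableSet_singleton a)), ?_⟩
    ext ω
    simp [hT_def, eq_comm]
  have hsC2 : MeasurableSet[mXC X C] sC := by
    rw [mXC]
    refine ⟨(Set.univ : Set S) ×ˢ ({c} : Set (Fin m)),
      MeasurableSet.univ.prod (measurableSet_singleton c), ?_⟩
    ext ω
    simp [hsC_def, eq_comm]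
  have hsT3 : MeasurableSet[mXCA X C A] sT := by
    rw [hsT_eq]; exact (hm23 _ hsC2).inter hT3
  -- a measurable version of Y
  set Y' : Ω → ℝ := hY.1.mk Y with hY'_def
  have hY'sm : StronglyMeasurable Y' := hY.1.stronglyMeasurable_mk
  have hYY' : Y =ᵐ[P] Y' := hY.1.ae_eq_mk
  -- the kernel and the associated densities
  set κ : Kernel (S × Fin m) Ω := condDistrib id f P with hκ_def
  set den : S × Fin m → ℝ := fun ξ => (κ ξ T).toReal with hden_def
  set num : S × Fin m → ℝ := fun ξ => ∫ ω', T.indicator Y' ω' ∂(κ ξ) with hnum_def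
  set h : S × Fin m → ℝ := fun ξ => (den ξ)⁻¹ * num ξ with hh_def
  have hden_meas : Measurable den := (Kernel.measurable_coe κ hT).ennreal_toReal
  have hnum_meas : Measurable num := by
    have : StronglyMeasurable num :=
      MeasureTheory.StronglyMeasurable.integral_kernel_prod_right
        (κ := κ) (f := fun _ ω' => T.indicator Y' ω')
        ((hY'sm.indicator hT).comp_measurable measurable_snd)
    exact this.measurable
  have hh_meas : Measurable h := hden_meas.inv.mul hnum_meas
  have hden_le_one : ∀ ξ, den ξ ≤ 1 := by
    intro ξ
    have h1 : κ ξ T ≤ 1 := prob_le_one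
    have := ENNReal.toReal_mono (by norm_num) h1
    simpa using this
  have hden_nonneg : ∀ ξ, 0 ≤ den ξ := fun ξ => ENNReal.toReal_nonneg
  -- indicator of T
  set indT : Ω → ℝ := T.indicator (fun _ => (1 : ℝ)) with hindT_def
  have hindT_int : Integrable indT P := (integrable_const 1).indicator hT
  have hindT_sm3 : StronglyMeasurable[mXCA X C A] indT :=
    (stronglyMeasurable_const (β := ℝ)).indicator hT3
  have hindT_le_one : ∀ ω, ‖indT ω‖ ≤ 1 := by
    intro ω
    rw [hindT_def]
    by_cases hω : ω ∈ T <;> simp [Set.indicator_of_mem, Set.indicator_of_notMem, hω]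
  -- den ∘ f is a version of the conditional probability of T given (X, C)
  have hden_eq : (fun ω => den (f ω)) =ᵐ[P] P[indT | mXC X C] := by
    have := condDistrib_ae_eq_condExp (μ := P) hf measurable_id hT
    rw [mXC]
    simpa [hκ_def, hindT_def, measureReal_def] using this
  have he_eq : (fun ω => e (X ω) (C ω) a) =ᵐ[P] fun ω => den (f ω) := by
    refine (he a).trans ?_
    exact hden_eq.symm
  have hden_pos : ∀ᵐ ω ∂P, 0 < den (f ω) := by
    filter_upwards [hA3 a, he_eq] with ω h1 h2
    rw [← h2]; exact h1
  -- num ∘ f is a version of the conditional expectation of 1_T * Y given (X, C)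
  have hTY'_int : Integrable (T.indicator Y') P := (hY.congr hYY').indicator hT
  have hnum_eq : (fun ω => num (f ω)) =ᵐ[P] P[T.indicator Y' | mXC X C] := by
    rw [mXC]
    exact (condExp_ae_eq_integral_condDistrib_id hf hTY'_int).symm
  have hindT_mul : ∀ (u : Ω → ℝ), (fun ω => indT ω * u ω) = T.indicator u := by
    intro u
    funext ω
    rw [hindT_def]
    by_cases hω : ω ∈ T <;>
      simp [Set.indicator_of_mem, Set.indicator_of_notMem, hω]
  have hindTY_int : Integrable (fun ω => indT ω * Y ω) P := by
    rw [hindT_mul]; exact hY.indicator hT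
  have hnum_eq2 : P[(fun ω => indT ω * Y ω) | mXC X C] =ᵐ[P] fun ω => num (f ω) := by
    refine (condExp_congr_ae ?_).trans hnum_eq.symm
    rw [hindT_mul]
    filter_upwards [hYY'] with ω hω
    by_cases h : ω ∈ T <;>
      simp [Set.indicator_of_mem, Set.indicator_of_notMem, h, hω]
  -- abbreviations
  set G : Ω → ℝ := P[Y | mXCA X C A] with hG_def
  have hG_int : Integrable G P := integrable_condExp
  have hG_sm3 : StronglyMeasurable[mXCA X C A] G := stronglyMeasurable_condExp
  have hden_m2 : Measurable[mXC X C] (fun ω => den (f ω)) := hden_meas.comp hf_m2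
  have hnum_m2 : Measurable[mXC X C] (fun ω => num (f ω)) := hnum_meas.comp hf_m2
  have hden_sm3 : StronglyMeasurable[mXCA X C A] (fun ω => den (f ω)) :=
    ((hden_m2.mono hm23 le_rfl)).stronglyMeasurable
  have hnum_sm3 : StronglyMeasurable[mXCA X C A] (fun ω => num (f ω)) :=
    ((hnum_m2.mono hm23 le_rfl)).stronglyMeasurable
  have hnumf_int : Integrable (fun ω => num (f ω)) P := integrable_condExp.congr hnum_eq.symm
  have hdenf_bd : ∀ᵐ ω ∂P, ‖den (f ω)‖ ≤ 1 := by
    refine Filter.Eventually.of_forall fun ω => ?_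
    rw [Real.norm_eq_abs, abs_of_nonneg (hden_nonneg _)]
    exact hden_le_one _
  have hindT_bd : ∀ᵐ ω ∂P, ‖indT ω‖ ≤ 1 := Filter.Eventually.of_forall hindT_le_one
  have hindT_aesm : AEStronglyMeasurable indT P := (hindT_sm3.mono hm3).aestronglyMeasurable
  -- the function w whose vanishing expresses the key factorization identity
  set v : Ω → ℝ := fun ω => den (f ω) * G ω - num (f ω) with hv_def
  set w : Ω → ℝ := fun ω => indT ω * v ω with hw_def
  have hv_sm3 : StronglyMeasurable[mXCA X C A] v := (hden_sm3.mul hG_sm3).sub hnum_sm3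
  have hw_sm : StronglyMeasurable[mXCA X C A] w := hindT_sm3.mul hv_sm3
  have hv_int : Integrable v P := by
    rw [hv_def]
    exact (hG_int.bdd_mul ((hden_meas.comp hf).aestronglyMeasurable) hdenf_bd).sub hnumf_int
  have hw_int : Integrable w P := by
    rw [hw_def]
    exact hv_int.bdd_mul hindT_aesm hindT_bd
  -- w has zero integral on every mXCA-measurable set
  have htest : ∀ B : Set Ω, MeasurableSet[mXCA X C A] B → ∫ ω in B, w ω ∂P = 0 := by
    intro B hB
    rw [mXCA] at hB
    obtain ⟨M, hM, rfl⟩ := hB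
    set Ma : Set (S × Fin m) := (fun ξ : S × Fin m => (ξ.1, ξ.2, a)) ⁻¹' M with hMa_def
    have hMa : MeasurableSet Ma :=
      (measurable_fst.prodMk (measurable_snd.prodMk measurable_const)) hM
    have hBT : f₃ ⁻¹' M ∩ T = f ⁻¹' Ma ∩ T := by
      ext ω
      simp only [Set.mem_inter_iff, Set.mem_preimage, hMa_def, hf_def, hf3_def, hT_def,
        Set.mem_setOf_eq]
      constructor
      · rintro ⟨h1, h2⟩; rw [h2] at h1; exact ⟨h1, h2⟩
      · rintro ⟨h1, h2⟩; rw [← h2] at h1; exact ⟨h1, h2⟩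
    set rMa : Ω → ℝ := fun ω => Ma.indicator (fun _ => (1 : ℝ)) (f ω) with hrMa_def
    have hrMa_le_one : ∀ ω, ‖rMa ω‖ ≤ 1 := by
      intro ω
      rw [hrMa_def]
      by_cases hω : f ω ∈ Ma <;>
        simp [Set.indicator_of_mem, Set.indicator_of_notMem, hω]
    have hrMa_sm2 : StronglyMeasurable[mXC X C] rMa :=
      ((measurable_const.indicator hMa).comp hf_m2).stronglyMeasurable
    have hrMa_aesm : AEStronglyMeasurable rMa P :=
      ((hrMa_sm2.mono hm2)).aestronglyMeasurable
    set r2 : Ω → ℝ := fun ω => rMa ω * den (f ω) with hr2_def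
    set q3 : Ω → ℝ := fun ω => rMa ω * den (f ω) * indT ω with hq3_def
    set u2 : Ω → ℝ := fun ω => rMa ω * num (f ω) with hu2_def
    have hr2_sm2 : StronglyMeasurable[mXC X C] r2 :=
      hrMa_sm2.mul hden_m2.stronglyMeasurable
    have hq3_sm3 : StronglyMeasurable[mXCA X C A] q3 :=
      ((hr2_sm2.mono hm23)).mul hindT_sm3
    have hu2_sm2 : StronglyMeasurable[mXC X C] u2 :=
      hrMa_sm2.mul hnum_m2.stronglyMeasurable
    have hq3_aesm : AEStronglyMeasurable q3 P := (hq3_sm3.mono hm3).aestronglyMeasurable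
    have hq3_bd : ∀ᵐ ω ∂P, ‖q3 ω‖ ≤ 1 := by
      refine Filter.Eventually.of_forall fun ω => ?_
      rw [hq3_def]
      simp only [norm_mul]
      refine mul_le_one₀ (mul_le_one₀ (hrMa_le_one ω) (norm_nonneg _) ?_) (norm_nonneg _)
        (hindT_le_one ω)
      rw [Real.norm_eq_abs, abs_of_nonneg (hden_nonneg _)]
      exact hden_le_one _
    have hr2_bd : ∀ᵐ ω ∂P, ‖r2 ω‖ ≤ 1 := by
      refine Filter.Eventually.of_forall fun ω => ?_
      rw [hr2_def]
      simp only [norm_mul]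
      refine mul_le_one₀ (hrMa_le_one ω) (norm_nonneg _) ?_
      rw [Real.norm_eq_abs, abs_of_nonneg (hden_nonneg _)]
      exact hden_le_one _
    have hr2_aesm : AEStronglyMeasurable r2 P := ((hr2_sm2.mono hm2)).aestronglyMeasurable
    -- integrabilities
    have hq3Y_int : Integrable (fun ω => q3 ω * Y ω) P := hY.bdd_mul hq3_aesm hq3_bd
    have hq3G_int : Integrable (fun ω => q3 ω * G ω) P := hG_int.bdd_mul hq3_aesm hq3_bd
    have hu2_int : Integrable u2 P := by
      rw [hu2_def]
      exact hnumf_int.bdd_mul hrMa_aesm (Filter.Eventually.of_forall hrMa_le_one)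
    have hu2indT_int : Integrable (fun ω => u2 ω * indT ω) P := by
      refine (hu2_int.bdd_mul hindT_aesm hindT_bd).congr ?_
      exact Filter.Eventually.of_forall fun ω => mul_comm _ _
    have hr2big_int : Integrable (fun ω => r2 ω * (indT ω * Y ω)) P :=
      hindTY_int.bdd_mul hr2_aesm hr2_bd
    -- reduce the set integral to a full-space integral
    have step1 : ∫ ω in f₃ ⁻¹' M, w ω ∂P = ∫ ω in f ⁻¹' Ma, w ω ∂P := by
      rw [hw_def, hindT_mul v, setIntegral_indicator hT, setIntegral_indicator hT, hBT]
    have hrMa_mul : ∀ (u : Ω → ℝ), (f ⁻¹' Ma).indicator u = fun ω => rMa ω * u ω := by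
      intro u
      funext ω
      rw [hrMa_def]
      by_cases hω : ω ∈ f ⁻¹' Ma
      · have hm' : f ω ∈ Ma := hω
        simp [Set.indicator_of_mem, hω, hm']
      · have hm' : f ω ∉ Ma := hω
        simp [Set.indicator_of_notMem, hω, hm']
    have step2 : ∫ ω in f ⁻¹' Ma, w ω ∂P = ∫ ω, (q3 ω * G ω - u2 ω * indT ω) ∂P := by
      rw [← integral_indicator (hf hMa), hrMa_mul]
      refine integral_congr_ae (Filter.Eventually.of_forall fun ω => ?_)
      rw [hw_def, hv_def, hq3_def, hu2_def]
      ring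
    -- compute both pieces by conditioning
    have hpullq3 : P[(fun ω => q3 ω * Y ω) | mXCA X C A] =ᵐ[P] fun ω => q3 ω * G ω :=
      condExp_mul_of_stronglyMeasurable_left hq3_sm3 hq3Y_int hY
    have stepA : ∫ ω, q3 ω * G ω ∂P = ∫ ω, r2 ω * num (f ω) ∂P := by
      have e1 : ∫ ω, q3 ω * G ω ∂P = ∫ ω, q3 ω * Y ω ∂P := by
        rw [← integral_condExp hm3 (f := fun ω => q3 ω * Y ω)]
        exact (integral_congr_ae hpullq3).symm
      have e2 : ∫ ω, q3 ω * Y ω ∂P = ∫ ω, r2 ω * (indT ω * Y ω) ∂P := by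
        refine integral_congr_ae (Filter.Eventually.of_forall fun ω => ?_)
        rw [hq3_def, hr2_def]; ring
      have hpullr2 : P[(fun ω => r2 ω * (indT ω * Y ω)) | mXC X C]
          =ᵐ[P] fun ω => r2 ω * (P[(fun ω' => indT ω' * Y ω') | mXC X C]) ω :=
        condExp_mul_of_stronglyMeasurable_left hr2_sm2 hr2big_int hindTY_int
      have e3 : ∫ ω, r2 ω * (indT ω * Y ω) ∂P = ∫ ω, r2 ω * num (f ω) ∂P := by
        rw [← integral_condExp hm2 (f := fun ω => r2 ω * (indT ω * Y ω))]
        refine integral_congr_ae (hpullr2.trans ?_)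
        filter_upwards [hnum_eq2] with ω hω
        rw [hω]
      rw [e1, e2, e3]
    have hpullu2 : P[(fun ω => u2 ω * indT ω) | mXC X C]
        =ᵐ[P] fun ω => u2 ω * (P[indT | mXC X C]) ω :=
      condExp_mul_of_stronglyMeasurable_left hu2_sm2 hu2indT_int hindT_int
    have stepB : ∫ ω, u2 ω * indT ω ∂P = ∫ ω, u2 ω * den (f ω) ∂P := by
      rw [← integral_condExp hm2 (f := fun ω => u2 ω * indT ω)]
      refine integral_congr_ae (hpullu2.trans ?_)
      filter_upwards [hden_eq] with ω hω
      rw [← hω]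
    have stepC : ∫ ω, r2 ω * num (f ω) ∂P = ∫ ω, u2 ω * den (f ω) ∂P := by
      refine integral_congr_ae (Filter.Eventually.of_forall fun ω => ?_)
      rw [hr2_def, hu2_def]; ring
    rw [step1, step2, integral_sub hq3G_int hu2indT_int, stepA, stepB, stepC, sub_self]
  -- hence w vanishes a.e.
  have hw0 : w =ᵐ[P] 0 := by
    have h1 : w =ᵐ[P.trim hm3] 0 := by
      refine Integrable.ae_eq_zero_of_forall_setIntegral_eq_zero (hw_int.trim hm3 hw_sm) ?_
      intro B hB _
      rw [← setIntegral_trim hm3 hw_sm hB]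
      exact htest B hB
    exact ae_eq_of_ae_eq_trim h1
  -- the conditional mean coincides with h ∘ f a.e. on T
  have hGh : ∀ᵐ ω ∂P, ω ∈ T → G ω = h (f ω) := by
    filter_upwards [hw0, hden_pos] with ω h1 h2
    intro hωT
    have hιω : indT ω = 1 := by rw [hindT_def]; exact Set.indicator_of_mem hωT _
    rw [hw_def] at h1
    simp only [hιω, one_mul, Pi.zero_apply] at h1
    simp only [hv_def] at h1
    have hde : den (f ω) * G ω = num (f ω) := by linarith
    simp only [hh_def]
    rw [← hde, inv_mul_cancel_left₀ h2.ne']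
  -- the kernel gives positive mass to T a.s.
  have hcond_ne : ∀ᵐ ω ∂P, condDistrib id f P (f ω) T ≠ 0 := by
    filter_upwards [hden_pos] with ω hω
    intro h0
    simp only [hden_def] at hω
    rw [hκ_def] at hω
    rw [h0] at hω
    simp at hω
  -- conclude: g (X ω) (C ω) a = h (f ω) a.e.
  have hB_ae : ∀ᵐ ω ∂P, ω ∈ T → f ω ∉ {ξ : S × Fin m | g ξ.1 ξ.2 a ≠ h ξ} := by
    filter_upwards [hg, hGh] with ω h1 h2
    intro hωT hmem
    have hAa : A ω = a := hωT
    rw [hAa] at h1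
    exact hmem (h1.trans (h2 hωT))
  have hgh_ae : ∀ᵐ ω ∂P, g (X ω) (C ω) a = h (f ω) := by
    have := aux_ae_of_ae_on_event P f hf T hT hcond_ne _ hB_ae
    filter_upwards [this] with ω hω
    exact not_not.mp hω
  -- final computation
  set indsT : Ω → ℝ := sT.indicator (fun _ => (1 : ℝ)) with hindsT_def
  set indsC : Ω → ℝ := sC.indicator (fun _ => (1 : ℝ)) with hindsC_def
  have hindsC_le_one : ∀ ω, ‖indsC ω‖ ≤ 1 := by
    intro ω
    rw [hindsC_def]
    by_cases hω : ω ∈ sC <;> simp [Set.indicator_of_mem, Set.indicator_of_notMem, hω]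
  have hindsC_aesm : AEStronglyMeasurable indsC P :=
    ((stronglyMeasurable_const (β := ℝ)).indicator hsCm).aestronglyMeasurable
  have hgsf_meas : Measurable (fun ω => gs (X ω) (C ω)) := hgs_meas.comp hf
  have hgsf_bd : ∀ᵐ ω ∂P, ‖gs (X ω) (C ω)‖ ≤ M0 :=
    Filter.Eventually.of_forall fun ω => by
      rw [Real.norm_eq_abs]; exact hM0 _ _
  have hgsf_int : Integrable (fun ω => gs (X ω) (C ω)) P :=
    Integrable.mono' (integrable_const M0) hgsf_meas.aestronglyMeasurable hgsf_bd
  have hgsf_m2 : Measurable[mXC X C] (fun ω => gs (X ω) (C ω)) := hgs_meas.comp hf_m2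
  set Z : Ω → ℝ := fun ω => Y ω - gs (X ω) (C ω) with hZ_def
  have hZ_int : Integrable Z P := hY.sub hgsf_int
  have hindsT_sm3 : StronglyMeasurable[mXCA X C A] indsT :=
    (stronglyMeasurable_const (β := ℝ)).indicator hsT3
  set W : Ω → ℝ := fun ω => indsT ω * (den (f ω))⁻¹ with hW_def
  have hW_sm3 : StronglyMeasurable[mXCA X C A] W :=
    hindsT_sm3.mul ((hden_m2.mono hm23 le_rfl)).inv.stronglyMeasurable
  have hstep0 : (fun ω => indsT ω * (e (X ω) (C ω) a)⁻¹ * (Y ω - gs (X ω) (C ω))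
        + indsC ω * gs (X ω) (C ω))
      =ᵐ[P] fun ω => W ω * Z ω + indsC ω * gs (X ω) (C ω) := by
    filter_upwards [he_eq] with ω hω
    simp only [hW_def, hZ_def]
    rw [hω, mul_assoc]
  have hWZ_int : Integrable (fun ω => W ω * Z ω) P := by
    refine hint.congr ?_
    filter_upwards [he_eq] with ω hω
    simp only [hW_def, hZ_def]
    rw [hω, mul_assoc]
  have hi2 : Integrable (fun ω => indsC ω * gs (X ω) (C ω)) P :=
    hgsf_int.bdd_mul hindsC_aesm (Filter.Eventually.of_forall hindsC_le_one)
  rw [integral_congr_ae hstep0, integral_add hWZ_int hi2]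
  -- the IPW term
  have hpullW : P[(fun ω => W ω * Z ω) | mXCA X C A]
      =ᵐ[P] fun ω => W ω * (P[Z | mXCA X C A]) ω :=
    condExp_mul_of_stronglyMeasurable_left hW_sm3 hWZ_int hZ_int
  have hPZ : P[Z | mXCA X C A] =ᵐ[P] fun ω => G ω - gs (X ω) (C ω) := by
    have h1 : P[Z | mXCA X C A]
        =ᵐ[P] P[Y | mXCA X C A] - P[(fun ω => gs (X ω) (C ω)) | mXCA X C A] :=
      condExp_sub hY hgsf_int _
    have h2 : P[(fun ω => gs (X ω) (C ω)) | mXCA X C A] = fun ω => gs (X ω) (C ω) :=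
      condExp_of_stronglyMeasurable hm3
        (((hgsf_m2.mono hm23 le_rfl)).stronglyMeasurable) hgsf_int
    refine h1.trans ?_
    rw [h2, hG_def]
    exact Filter.EventuallyEq.rfl
  have hWG_ae : P[(fun ω => W ω * Z ω) | mXCA X C A]
      =ᵐ[P] fun ω => W ω * (h (f ω) - gs (X ω) (C ω)) := by
    refine hpullW.trans ?_
    filter_upwards [hPZ, hGh] with ω h1 h2
    by_cases hωT : ω ∈ T
    · rw [h1, h2 hωT]
    · have hz : indsT ω = 0 := by
        rw [hindsT_def]
        exact Set.indicator_of_notMem (fun hmem => hωT hmem.2) _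
      simp only [hW_def, hz, zero_mul]
  have hstep1 : ∫ ω, W ω * Z ω ∂P = ∫ ω, W ω * (h (f ω) - gs (X ω) (C ω)) ∂P := by
    rw [← integral_condExp hm3 (f := fun ω => W ω * Z ω)]
    exact integral_congr_ae hWG_ae
  set q : Ω → ℝ := fun ω => indsC ω * (den (f ω))⁻¹ * (h (f ω) - gs (X ω) (C ω)) with hq_def
  have hq_sm2 : StronglyMeasurable[mXC X C] q := by
    refine StronglyMeasurable.mul (StronglyMeasurable.mul ?_ hden_m2.inv.stronglyMeasurable) ?_
    · exact (stronglyMeasurable_const (β := ℝ)).indicator hsC2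
    · exact ((hh_meas.comp hf_m2).sub hgsf_m2).stronglyMeasurable
  have hWdiff_eq : (fun ω => W ω * (h (f ω) - gs (X ω) (C ω)))
      = fun ω => q ω * indT ω := by
    funext ω
    simp only [hW_def, hq_def, hindT_def, hindsT_def, hindsC_def, hsT_eq]
    by_cases h1 : ω ∈ sC <;> by_cases h2 : ω ∈ T <;>
      simp [Set.indicator_apply, h1, h2] <;> ring
  have hqindT_int : Integrable (fun ω => q ω * indT ω) P := by
    rw [← hWdiff_eq]
    exact integrable_condExp.congr hWG_ae
  have hpullq : P[(fun ω => q ω * indT ω) | mXC X C]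
      =ᵐ[P] fun ω => q ω * (P[indT | mXC X C]) ω :=
    condExp_mul_of_stronglyMeasurable_left hq_sm2 hqindT_int hindT_int
  have hqden_ae : P[(fun ω => q ω * indT ω) | mXC X C]
      =ᵐ[P] fun ω => indsC ω * (h (f ω) - gs (X ω) (C ω)) := by
    refine hpullq.trans ?_
    filter_upwards [hden_eq, hden_pos] with ω h1 h2
    rw [← h1]
    simp only [hq_def]
    have hd : den (f ω) ≠ 0 := h2.ne'
    field_simp
  have hi3 : Integrable (fun ω => indsC ω * (h (f ω) - gs (X ω) (C ω))) P :=
    integrable_condExp.congr hqden_ae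
  have hstep2 : ∫ ω, q ω * indT ω ∂P
      = ∫ ω, indsC ω * (h (f ω) - gs (X ω) (C ω)) ∂P := by
    rw [← integral_condExp hm2 (f := fun ω => q ω * indT ω)]
    exact integral_congr_ae hqden_ae
  have hfin1 : ∫ ω, W ω * Z ω ∂P = ∫ ω, indsC ω * (h (f ω) - gs (X ω) (C ω)) ∂P := by
    rw [hstep1, hWdiff_eq, hstep2]
  rw [hfin1, ← integral_add hi3 hi2]
  have hfin2 : (fun ω => indsC ω * (h (f ω) - gs (X ω) (C ω)) + indsC ω * gs (X ω) (C ω))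
      = fun ω => indsC ω * h (f ω) := by
    funext ω; ring
  rw [hfin2]
  have hfin3 : ∫ ω, indsC ω * h (f ω) ∂P = ∫ ω in sC, h (f ω) ∂P := by
    rw [← integral_indicator hsCm]
    refine integral_congr_ae (Filter.Eventually.of_forall fun ω => ?_)
    simp only [hindsC_def]
    by_cases hω : ω ∈ sC <;>
      simp [Set.indicator_of_mem, Set.indicator_of_notMem, hω]
  have hPsC_ne : (P sC).toReal ≠ 0 :=
    ENNReal.toReal_ne_zero.mpr ⟨(hCpos c).ne', measure_ne_top P sC⟩
  have hRHS : (P sC).toReal * ∫ ω, g (X ω) c a ∂(P[|sC]) = ∫ ω in sC, h (f ω) ∂P := by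
    have h1 : ∫ ω, g (X ω) c a ∂(P[|sC])
        = (P sC).toReal⁻¹ * ∫ ω in sC, g (X ω) c a ∂P := by
      have hcond : P[|sC] = (P sC)⁻¹ • P.restrict sC := rfl
      rw [hcond, integral_smul_measure, ENNReal.toReal_inv, smul_eq_mul]
    have h2 : ∫ ω in sC, g (X ω) c a ∂P = ∫ ω in sC, h (f ω) ∂P := by
      refine integral_congr_ae ?_
      filter_upwards [ae_restrict_of_ae hgh_ae, ae_restrict_mem hsCm] with ω ha hb
      have hc : C ω = c := hb
      rw [← hc]
      exact ha
    rw [h1, h2, ← mul_assoc, mul_inv_cancel₀ hPsC_ne, one_mul]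
  rw [hfin3]
  exact hRHS.symm
end

section
/- Assume e_a(X) = P[A = a | X] > 0 almost surely and let g* : S → ℝ be any bounded measurable function. Then E[ 1{A = a} · p_c(X) · e_a(X)^{-1} · (Y − g*(X)) + 1{C = c} · g*(X) ] = P[C = c] · ψ(c, a). Consequently, when the participation model p_c and the treatment model e_a are correctly specified, the asymptotic limit of the augmented estimator for ψ(c, a) equals ψ(c, a) even when the outcome-model limit g* differs from h_a. -/
open MeasureTheory ProbabilityTheory

section AuxDisintegration
set_option linter.unusedSectionVars false
variable {Ω S : Type*} [MeasurableSpace Ω] [StandardBorelSpace Ω] [Nonempty Ω]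
  [MeasurableSpace S] [StandardBorelSpace S]

lemma aux_compProd (P : Measure Ω) [IsProbabilityMeasure P] (X : Ω → S) (hX : Measurable X) :
    (P.map X) ⊗ₘ (condDistrib id X P) = P.map (fun ω => (X ω, ω)) := by
  rw [condDistrib]
  have h1 : (P.map (fun ω => (X ω, id ω))).fst = P.map X :=
    Measure.fst_map_prodMk measurable_id
  have h2 := (P.map (fun ω => (X ω, id ω))).disintegrate
    (P.map (fun ω => (X ω, id ω))).condKernel
  rw [h1] at h2
  simpa using h2

lemma aux_double (P : Measure Ω) [IsProbabilityMeasure P] (X : Ω → S) (hX : Measurable X)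
    (F : Ω → ENNReal) (hF : Measurable F) :
    ∫⁻ ω, F ω ∂P = ∫⁻ ω, ∫⁻ ω', F ω' ∂(condDistrib id X P (X ω)) ∂P := by
  have h1 : ∫⁻ z : S × Ω, F z.2 ∂((P.map X) ⊗ₘ (condDistrib id X P))
      = ∫⁻ x, ∫⁻ ω', F ω' ∂(condDistrib id X P x) ∂(P.map X) :=
    Measure.lintegral_compProd (hF.comp measurable_snd)
  have h2 : ∫⁻ z : S × Ω, F z.2 ∂(P.map (fun ω => (X ω, ω)))
      = ∫⁻ ω, F ω ∂P := by
    rw [lintegral_map (show Measurable fun z : S × Ω => F z.2 from hF.comp measurable_snd)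
      (show Measurable fun ω => (X ω, ω) from hX.prodMk measurable_id)]
  have h3 : ∫⁻ x, ∫⁻ ω', F ω' ∂(condDistrib id X P x) ∂(P.map X)
      = ∫⁻ ω, ∫⁻ ω', F ω' ∂(condDistrib id X P (X ω)) ∂P := by
    rw [lintegral_map (Measurable.lintegral_kernel_prod_right
      (f := fun _ y => F y) (hF.comp measurable_snd)) hX]
  rw [← h2, ← aux_compProd P X hX, h1, h3]

lemma aux_fiber (P : Measure Ω) [IsProbabilityMeasure P] (X : Ω → S) (hX : Measurable X) :
    ∀ᵐ ω ∂P, condDistrib id X P (X ω) {ω' | X ω' = X ω}ᶜ = 0 := by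
  letI := upgradeStandardBorel S
  have hΔ : MeasurableSet {q : S × Ω | X q.2 = q.1} :=
    ((show Measurable fun q : S × Ω => X q.2 from
        hX.comp measurable_snd).stronglyMeasurable).measurableSet_eq_fun
      (measurable_fst.stronglyMeasurable)
  have h0 : (P.map (fun ω => (X ω, ω))) {q : S × Ω | X q.2 = q.1}ᶜ = 0 := by
    rw [Measure.map_apply (show Measurable fun ω => (X ω, ω) from
      hX.prodMk measurable_id) hΔ.compl]
    have : (fun ω => (X ω, ω)) ⁻¹' {q : S × Ω | X q.2 = q.1}ᶜ = (∅ : Set Ω) := by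
      ext ω; simp
    rw [this, measure_empty]
  rw [← aux_compProd P X hX, Measure.compProd_apply hΔ.compl] at h0
  have h1 : ∫⁻ ω, condDistrib id X P (X ω)
      (Prod.mk (X ω) ⁻¹' {q : S × Ω | X q.2 = q.1}ᶜ) ∂P = 0 := by
    rw [← h0]
    exact (lintegral_map (Kernel.measurable_kernel_prodMk_left hΔ.compl) hX).symm
  have h2 := (lintegral_eq_zero_iff
    ((Kernel.measurable_kernel_prodMk_left hΔ.compl).comp hX)).mp h1
  filter_upwards [h2] with ω hω
  have : (Prod.mk (X ω) ⁻¹' {q : S × Ω | X q.2 = q.1}ᶜ) = {ω' | X ω' = X ω}ᶜ := by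
    ext ω'; simp
  rw [← this]
  exact hω

lemma aux_null (P : Measure Ω) [IsProbabilityMeasure P] (X : Ω → S) (hX : Measurable X)
    (N : Set Ω) (hN : MeasurableSet N) (hPN : P N = 0) :
    ∀ᵐ ω ∂P, condDistrib id X P (X ω) N = 0 := by
  have h1 : ∫⁻ ω, condDistrib id X P (X ω) N ∂P = P N := by
    have := setLIntegral_preimage_condDistrib (μ := P) (X := X) (Y := id) hX
      aemeasurable_id hN MeasurableSet.univ
    simpa using this
  rw [hPN] at h1
  have := (lintegral_eq_zero_iff ((Kernel.measurable_coe _ hN).comp hX)).mp h1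
  exact this

lemma aux_nnnorm_toReal_mul (t : ENNReal) (ht : t ≠ ⊤) (r : ℝ) :
    (‖t.toReal * r‖₊ : ENNReal) = ENNReal.ofReal |r| * t := by
  rw [← enorm_eq_nnnorm, Real.enorm_eq_ofReal_abs, abs_mul, abs_of_nonneg ENNReal.toReal_nonneg,
    ENNReal.ofReal_mul ENNReal.toReal_nonneg, ENNReal.ofReal_toReal ht, mul_comm]

end AuxDisintegration

set_option maxHeartbeats 2000000 in
/-- Assume `e_a(X) = P[A = a | X] > 0` almost surely and let
`g* : S → ℝ` be any bounded measurable function. Then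
`E[ 1{A = a} p_c(X) e_a(X)⁻¹ (Y − g*(X)) + 1{C = c} g*(X) ] = P[C = c] · ψ(c, a)`;
hence when the participation model `p_c` and the treatment model `e_a` are correctly
specified, the asymptotic limit of the augmented estimator for `ψ(c, a)` equals
`ψ(c, a)` even when the outcome-model limit `g*` differs from `h_a`. -/
theorem augmented_estimator_psi_robust_to_outcome_model_misspecification
    {Ω S 𝒜 : Type*} [MeasurableSpace Ω] [StandardBorelSpace Ω] [Nonempty Ω]
    [MeasurableSpace S] [StandardBorelSpace S]
    [MeasurableSpace 𝒜] [MeasurableSingletonClass 𝒜] [Fintype 𝒜]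
    {m : ℕ}
    (P : Measure Ω) [IsProbabilityMeasure P]
    (X : Ω → S) (C : Ω → Fin m) (A : Ω → 𝒜) (Y : Ω → ℝ)
    (hX : Measurable X) (hC : Measurable C) (hA : Measurable A)
    (hY : Integrable Y P)
    (hCpos : ∀ c' : Fin m, 0 < P {ω | C ω = c'})
    -- fixed center and treatment
    (c : Fin m) (a : 𝒜)
    -- h a x is a version of E[Y | X = x, A = a]
    (h : S → 𝒜 → ℝ)
    (hh : (fun ω => h (X ω) (A ω))
        =ᵐ[P] P[Y | MeasurableSpace.comap (fun ω => (X ω, A ω)) inferInstance])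
    -- e x is a version of P[A = a | X = x] (correctly specified treatment model)
    (e : S → ℝ)
    (he : (fun ω => e (X ω))
        =ᵐ[P] P[({ω' | A ω' = a}.indicator (fun _ => (1 : ℝ))) |
            MeasurableSpace.comap X inferInstance])
    (hepos : ∀ᵐ ω ∂P, 0 < e (X ω))
    -- p x is a version of P[C = c | X = x] (correctly specified participation model)
    (p : S → ℝ)
    (hp : (fun ω => p (X ω))
        =ᵐ[P] P[({ω' | C ω' = c}.indicator (fun _ => (1 : ℝ))) |
            MeasurableSpace.comap X inferInstance])
    -- g* : arbitrary bounded measurable outcome-model limit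
    (gs : S → ℝ) (hgs_meas : Measurable gs)
    (hgs_bdd : ∃ M : ℝ, ∀ x : S, |gs x| ≤ M)
    -- the inverse-probability-weighted term has a well-defined expectation
    (hint : Integrable (fun ω =>
        ({ω' | A ω' = a}.indicator (fun _ => (1 : ℝ)) ω)
          * p (X ω) * (e (X ω))⁻¹ * (Y ω - gs (X ω))) P) :
    ∫ ω, (({ω' | A ω' = a}.indicator (fun _ => (1 : ℝ)) ω)
            * p (X ω) * (e (X ω))⁻¹ * (Y ω - gs (X ω))
          + ({ω' | C ω' = c}.indicator (fun _ => (1 : ℝ)) ω) * gs (X ω)) ∂P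
      = (P {ω | C ω = c}).toReal * ∫ ω, h (X ω) a ∂(P[|{ω | C ω = c}]) := by
  classical

  obtain ⟨M, hM⟩ := hgs_bdd
  set ρ : Kernel S Ω := condDistrib id X P with hρdef
  have hsA : MeasurableSet {ω' | A ω' = a} := hA (measurableSet_singleton a)
  have hsC : MeasurableSet {ω' | C ω' = c} := hC (measurableSet_singleton c)
  set indA : Ω → ℝ := {ω' | A ω' = a}.indicator (fun _ => (1 : ℝ)) with hindAdef
  set indC : Ω → ℝ := {ω' | C ω' = c}.indicator (fun _ => (1 : ℝ)) with hindCdef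
  have hindA_meas : Measurable indA := measurable_const.indicator hsA
  have hindC_meas : Measurable indC := measurable_const.indicator hsC
  have hindA_int : Integrable indA P := (integrable_const (1 : ℝ)).indicator hsA
  have hindC_int : Integrable indC P := (integrable_const (1 : ℝ)).indicator hsC
  have hXA : Measurable fun ω => (X ω, A ω) := hX.prodMk hA
  have hm₁ : MeasurableSpace.comap X inferInstance ≤ (inferInstance : MeasurableSpace Ω) :=
    hX.comap_le
  have hm₂ : MeasurableSpace.comap (fun ω => (X ω, A ω)) inferInstance
      ≤ (inferInstance : MeasurableSpace Ω) := hXA.comap_le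
  have hm₁₂ : MeasurableSpace.comap X inferInstance
      ≤ MeasurableSpace.comap (fun ω => (X ω, A ω)) inferInstance := by
    have h1 : (MeasurableSpace.comap (Prod.fst : S × 𝒜 → S) inferInstance).comap
          (fun ω => (X ω, A ω))
        = MeasurableSpace.comap X inferInstance := MeasurableSpace.comap_comp
    rw [← h1]
    exact MeasurableSpace.comap_mono measurable_fst.comap_le
  have hX₁ : Measurable[MeasurableSpace.comap X inferInstance] X := comap_measurable X
  have hA₂ : Measurable[MeasurableSpace.comap (fun ω => (X ω, A ω)) inferInstance] A :=
    measurable_snd.comp (comap_measurable fun ω => (X ω, A ω))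
  set e' : Ω → ℝ := P[indA | MeasurableSpace.comap X inferInstance] with he'def
  set p' : Ω → ℝ := P[indC | MeasurableSpace.comap X inferInstance] with hp'def
  set G : Ω → ℝ := P[Y | MeasurableSpace.comap (fun ω => (X ω, A ω)) inferInstance] with hGdef
  have he'sm : StronglyMeasurable[MeasurableSpace.comap X inferInstance] e' :=
    stronglyMeasurable_condExp
  have hp'sm : StronglyMeasurable[MeasurableSpace.comap X inferInstance] p' :=
    stronglyMeasurable_condExp
  have hGsm₂ : StronglyMeasurable[MeasurableSpace.comap (fun ω => (X ω, A ω)) inferInstance] G :=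
    stronglyMeasurable_condExp
  have hGsm : StronglyMeasurable G := hGsm₂.mono hm₂
  have hindAsm : StronglyMeasurable indA := hindA_meas.stronglyMeasurable
  have hgsX_meas : Measurable fun ω => gs (X ω) := hgs_meas.comp hX
  have hgsX_int : Integrable (fun ω => gs (X ω)) P := by
    refine Integrable.mono' (integrable_const M) hgsX_meas.aestronglyMeasurable ?_
    exact Filter.Eventually.of_forall fun ω => by
      simpa [Real.norm_eq_abs] using hM (X ω)
  have hgsX_sm₁ : StronglyMeasurable[MeasurableSpace.comap X inferInstance]
      fun ω => gs (X ω) := (hgs_meas.comp hX₁).stronglyMeasurable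
  -- the kernel-versions of the conditional probabilities
  have hcondS : ∀ s : Set Ω, MeasurableSet s →
      (fun ω => (ρ (X ω) s).toReal)
        =ᵐ[P] P[s.indicator (fun _ => (1 : ℝ)) | MeasurableSpace.comap X inferInstance] := by
    intro s hs
    have h0 := condDistrib_ae_eq_condExp (μ := P) hX measurable_id hs
    simp only [Set.preimage_id] at h0
    exact h0
  have heρ : ∀ᵐ ω ∂P, (ρ (X ω) {ω' | A ω' = a}).toReal = e (X ω) :=
    (hcondS _ hsA).trans he.symm
  have hpρ : ∀ᵐ ω ∂P, (ρ (X ω) {ω' | C ω' = c}).toReal = p' ω :=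
    hcondS _ hsC
  have he'e : (fun ω => e (X ω)) =ᵐ[P] e' := he
  have hp'p : (fun ω => p (X ω)) =ᵐ[P] p' := hp
  have he'pos : ∀ᵐ ω ∂P, 0 < e' ω := by
    filter_upwards [he'e, hepos] with ω h1 h2
    rw [← h1]; exact h2
  -- definition of the outcome regression function w(x) ~ E[Y | X = x, A = a]
  set w : S → ℝ := fun x =>
    (∫ ω', indA ω' * G ω' ∂(ρ x)) * ((ρ x {ω' | A ω' = a}).toReal)⁻¹ with hwdef
  have hw_meas : Measurable w := by
    have h1 : StronglyMeasurable fun x => ∫ ω', indA ω' * G ω' ∂(ρ x) := by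
      refine MeasureTheory.StronglyMeasurable.integral_kernel_prod_right
        (κ := ρ) (f := fun _ ω' => indA ω' * G ω') ?_
      exact (hindAsm.comp_measurable measurable_snd).mul (hGsm.comp_measurable measurable_snd)
    exact h1.measurable.mul ((Kernel.measurable_coe ρ hsA).ennreal_toReal.inv)
  have hwX_sm₁ : StronglyMeasurable[MeasurableSpace.comap X inferInstance]
      fun ω => w (X ω) := (hw_meas.comp hX₁).stronglyMeasurable
  -- the key identification: h (X ω) a = w (X ω) a.e.
  have hw_eq : (fun ω => h (X ω) a) =ᵐ[P] fun ω => w (X ω) := by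
    have hhN : P {ω | ¬ h (X ω) (A ω) = G ω} = 0 := by
      have h0 := hh
      rw [Filter.EventuallyEq, ae_iff] at h0
      exact h0
    set N : Set Ω := toMeasurable P {ω | ¬ h (X ω) (A ω) = G ω} with hNdef
    have hNmeas : MeasurableSet N := measurableSet_toMeasurable _ _
    have hPN : P N = 0 := by rw [hNdef, measure_toMeasurable]; exact hhN
    filter_upwards [aux_null P X hX N hNmeas hPN, aux_fiber P X hX, heρ, hepos]
      with ω h1 h2 h3 h4
    have hae1 : ∀ᵐ ω' ∂(ρ (X ω)), ω' ∉ N := by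
      rw [ae_iff]
      simpa using h1
    have hae2 : ∀ᵐ ω' ∂(ρ (X ω)), X ω' = X ω := by
      rw [ae_iff]
      exact h2
    have key : (fun ω' => indA ω' * G ω')
        =ᵐ[ρ (X ω)] fun ω' => {ω' | A ω' = a}.indicator (fun _ => h (X ω) a) ω' := by
      filter_upwards [hae1, hae2] with ω' hn hx
      by_cases ha' : A ω' = a
      · have hG : h (X ω') (A ω') = G ω' := by
          by_contra hne
          exact hn (subset_toMeasurable _ _ hne)
        rw [hindAdef]
        rw [Set.indicator_of_mem (show ω' ∈ {ω' | A ω' = a} from ha'),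
          Set.indicator_of_mem (show ω' ∈ {ω' | A ω' = a} from ha'), one_mul]
        rw [ha', hx] at hG
        exact hG.symm
      · rw [hindAdef]
        rw [Set.indicator_of_notMem (show ω' ∉ {ω' | A ω' = a} from ha'),
          Set.indicator_of_notMem (show ω' ∉ {ω' | A ω' = a} from ha'), zero_mul]
    have hInt : ∫ ω', indA ω' * G ω' ∂(ρ (X ω))
        = (ρ (X ω) {ω' | A ω' = a}).toReal • h (X ω) a := by
      rw [integral_congr_ae key, integral_indicator_const _ hsA]
      rfl
    show h (X ω) a = w (X ω)
    rw [hwdef]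
    dsimp only
    rw [hInt, h3, smul_eq_mul]
    field_simp
  -- the m₂ conditional expectation step
  set g₂ : Ω → ℝ := fun ω => Y ω - gs (X ω) with hg₂def
  have hg₂_int : Integrable g₂ P := hY.sub hgsX_int
  set f₂ : Ω → ℝ := fun ω => indA ω * p' ω * (e' ω)⁻¹ with hf₂def
  have hf₂sm : StronglyMeasurable[MeasurableSpace.comap (fun ω => (X ω, A ω)) inferInstance]
      f₂ := by
    have h1 : Measurable[MeasurableSpace.comap (fun ω => (X ω, A ω)) inferInstance] indA :=
      measurable_const.indicator (hA₂ (measurableSet_singleton a))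
    have h2 : Measurable[MeasurableSpace.comap (fun ω => (X ω, A ω)) inferInstance] p' :=
      (hp'sm.mono hm₁₂).measurable
    have h3 : Measurable[MeasurableSpace.comap (fun ω => (X ω, A ω)) inferInstance] e' :=
      (he'sm.mono hm₁₂).measurable
    exact ((h1.mul h2).mul h3.inv).stronglyMeasurable
  have hT1congr : (fun ω => indA ω * p (X ω) * (e (X ω))⁻¹ * (Y ω - gs (X ω)))
      =ᵐ[P] fun ω => f₂ ω * (Y ω - gs (X ω)) := by
    filter_upwards [he'e, hp'p] with ω h1 h2
    rw [hf₂def]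
    dsimp only
    rw [← h1, ← h2]
  have hT1'_int : Integrable (fun ω => f₂ ω * (Y ω - gs (X ω))) P := hint.congr hT1congr
  have hmul₂ := condExp_mul_of_stronglyMeasurable_left (μ := P) hf₂sm
    (show Integrable (f₂ * g₂) P from hT1'_int)
    hg₂_int
  -- P[Y - gs∘X | m₂] = G - gs∘X a.e.
  have hcond_sub : P[g₂ |
        MeasurableSpace.comap (fun ω => (X ω, A ω)) inferInstance]
      =ᵐ[P] fun ω => G ω - gs (X ω) := by
    have h1 := condExp_sub (m := MeasurableSpace.comap (fun ω => (X ω, A ω)) inferInstance)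
      (μ := P) hY hgsX_int
    have h2 : P[(fun ω => gs (X ω)) |
          MeasurableSpace.comap (fun ω => (X ω, A ω)) inferInstance] = fun ω => gs (X ω) :=
      condExp_of_stronglyMeasurable hm₂ (hgsX_sm₁.mono hm₁₂) hgsX_int
    refine h1.trans ?_
    rw [h2, hGdef]
    exact Filter.EventuallyEq.rfl
  -- replace G with w∘X under the indicator
  have hGa : (fun ω => indA ω * G ω) =ᵐ[P] fun ω => indA ω * w (X ω) := by
    filter_upwards [hh, hw_eq] with ω h1 h2
    by_cases ha' : A ω = a
    · rw [hindAdef]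
      rw [Set.indicator_of_mem (show ω ∈ {ω' | A ω' = a} from ha'), one_mul, one_mul]
      rw [← h1, ha']
      exact h2
    · rw [hindAdef]
      rw [Set.indicator_of_notMem (show ω ∉ {ω' | A ω' = a} from ha'), zero_mul, zero_mul]
  set k : Ω → ℝ := fun ω => p' ω * (e' ω)⁻¹ * (w (X ω) - gs (X ω)) with hkdef
  have hksm : StronglyMeasurable[MeasurableSpace.comap X inferInstance] k :=
    ((hp'sm.measurable.mul he'sm.measurable.inv).mul
      ((hw_meas.comp hX₁).sub (hgs_meas.comp hX₁))).stronglyMeasurable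
  have hstep1 : (fun ω => f₂ ω * (G ω - gs (X ω))) =ᵐ[P] fun ω => k ω * indA ω := by
    filter_upwards [hGa] with ω h1
    rw [hf₂def, hkdef]
    dsimp only
    linear_combination (p' ω * (e' ω)⁻¹) * h1
  have hcondT1 : P[(f₂ * g₂) |
        MeasurableSpace.comap (fun ω => (X ω, A ω)) inferInstance]
      =ᵐ[P] fun ω => k ω * indA ω := by
    refine hmul₂.trans ?_
    refine Filter.EventuallyEq.trans ?_ hstep1
    filter_upwards [hcond_sub] with ω h1
    show f₂ ω * _ = _
    rw [h1]
  have hkindA_int : Integrable (fun ω => k ω * indA ω) P :=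
    Integrable.congr integrable_condExp hcondT1
  have hmul₁ := condExp_mul_of_stronglyMeasurable_left (μ := P) hksm
    (show Integrable (k * indA) P from hkindA_int) hindA_int
  have hke' : (fun ω => k ω * e' ω) =ᵐ[P] fun ω => p' ω * (w (X ω) - gs (X ω)) := by
    filter_upwards [he'pos] with ω h1
    rw [hkdef]
    dsimp only
    field_simp
  have hcondkA : P[(k * indA) | MeasurableSpace.comap X inferInstance]
      =ᵐ[P] fun ω => k ω * e' ω := by
    refine hmul₁.trans ?_
    rw [he'def]
    exact Filter.EventuallyEq.rfl
  have hke'_int : Integrable (fun ω => k ω * e' ω) P :=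
    Integrable.congr integrable_condExp hcondkA
  have hpw_gs_int : Integrable (fun ω => p' ω * (w (X ω) - gs (X ω))) P :=
    hke'_int.congr hke'
  -- T1 computation
  have hT1 : ∫ ω, indA ω * p (X ω) * (e (X ω))⁻¹ * (Y ω - gs (X ω)) ∂P
      = ∫ ω, p' ω * (w (X ω) - gs (X ω)) ∂P := by
    have e1 := integral_condExp (μ := P) (f := f₂ * g₂) hm₂
    have e2 := integral_congr_ae hcondT1
    rw [e1] at e2
    have e3 := integral_condExp (μ := P) (f := k * indA) hm₁
    have e4 := integral_congr_ae hcondkA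
    rw [e3] at e4
    calc ∫ ω, indA ω * p (X ω) * (e (X ω))⁻¹ * (Y ω - gs (X ω)) ∂P
        = ∫ ω, f₂ ω * (Y ω - gs (X ω)) ∂P := integral_congr_ae hT1congr
      _ = ∫ ω, k ω * indA ω ∂P := e2
      _ = ∫ ω, k ω * e' ω ∂P := e4
      _ = ∫ ω, p' ω * (w (X ω) - gs (X ω)) ∂P := integral_congr_ae hke'
  -- T2 computation
  have hgsindC_int : Integrable (fun ω => gs (X ω) * indC ω) P := by
    refine Integrable.mono' (integrable_const M) ?_ ?_
    · exact (hgsX_meas.mul hindC_meas).aestronglyMeasurable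
    · refine Filter.Eventually.of_forall fun ω => ?_
      rw [Real.norm_eq_abs, abs_mul]
      rw [hindCdef]
      by_cases hc' : C ω = c
      · rw [Set.indicator_of_mem (show ω ∈ {ω' | C ω' = c} from hc')]
        simpa using hM (X ω)
      · rw [Set.indicator_of_notMem (show ω ∉ {ω' | C ω' = c} from hc')]
        simp only [abs_zero, mul_zero]
        exact le_trans (abs_nonneg _) (hM (X ω))
  have hmulC := condExp_mul_of_stronglyMeasurable_left (μ := P) hgsX_sm₁
    (show Integrable ((fun ω => gs (X ω)) * indC) P from hgsindC_int) hindC_int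
  have hcondgsC : P[((fun ω => gs (X ω)) * indC) | MeasurableSpace.comap X inferInstance]
      =ᵐ[P] fun ω => gs (X ω) * p' ω := by
    refine hmulC.trans ?_
    rw [hp'def]
    exact Filter.EventuallyEq.rfl
  have hgsp'_int : Integrable (fun ω => gs (X ω) * p' ω) P :=
    Integrable.congr integrable_condExp hcondgsC
  have hT2 : ∫ ω, indC ω * gs (X ω) ∂P = ∫ ω, gs (X ω) * p' ω ∂P := by
    calc ∫ ω, indC ω * gs (X ω) ∂P = ∫ ω, gs (X ω) * indC ω ∂P := by
          congr 1
          ext ω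
          ring
      _ = ∫ ω, gs (X ω) * p' ω ∂P := by
          have e7 := integral_condExp (μ := P) (f := (fun ω => gs (X ω)) * indC) hm₁
          have e8 := integral_congr_ae hcondgsC
          rw [e7] at e8
          exact e8
  -- combine
  have hpw_int : Integrable (fun ω => p' ω * w (X ω)) P := by
    have h0 := hpw_gs_int.add hgsp'_int
    refine h0.congr (Filter.Eventually.of_forall fun ω => ?_)
    show p' ω * (w (X ω) - gs (X ω)) + gs (X ω) * p' ω = p' ω * w (X ω)
    ring
  -- the integrability of indC * w∘X via the kernel
  have hindCw_int : Integrable (fun ω => indC ω * w (X ω)) P := by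
    constructor
    · exact (hindC_meas.mul (hw_meas.comp hX)).aestronglyMeasurable
    · show (∫⁻ ω, ‖indC ω * w (X ω)‖₊ ∂P) < ⊤
      have hFmeas : Measurable fun ω' => (‖indC ω' * w (X ω')‖₊ : ENNReal) :=
        (hindC_meas.mul (hw_meas.comp hX)).nnnorm.coe_nnreal_ennreal
      rw [aux_double P X hX _ hFmeas]
      have hinner : ∀ᵐ ω ∂P, ∫⁻ ω', (‖indC ω' * w (X ω')‖₊ : ENNReal) ∂(ρ (X ω))
          = ENNReal.ofReal |w (X ω)| * ρ (X ω) {ω' | C ω' = c} := by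
        filter_upwards [aux_fiber P X hX] with ω h2
        have hae2 : ∀ᵐ ω' ∂(ρ (X ω)), X ω' = X ω := by
          rw [ae_iff]; exact h2
        have hcongr : (fun ω' => (‖indC ω' * w (X ω')‖₊ : ENNReal))
            =ᵐ[ρ (X ω)] fun ω' =>
              {ω' | C ω' = c}.indicator (fun _ => ENNReal.ofReal |w (X ω)|) ω' := by
          filter_upwards [hae2] with ω' hx
          rw [hx, hindCdef]
          by_cases hc' : C ω' = c
          · rw [Set.indicator_of_mem (show ω' ∈ {ω' | C ω' = c} from hc'),
              Set.indicator_of_mem (show ω' ∈ {ω' | C ω' = c} from hc'), one_mul]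
            rw [← Real.enorm_eq_ofReal_abs, enorm_eq_nnnorm]
          · rw [Set.indicator_of_notMem (show ω' ∉ {ω' | C ω' = c} from hc'),
              Set.indicator_of_notMem (show ω' ∉ {ω' | C ω' = c} from hc'), zero_mul]
            simp
        rw [lintegral_congr_ae hcongr, lintegral_indicator_const hsC]
      rw [lintegral_congr_ae hinner]
      have houter : (fun ω => ENNReal.ofReal |w (X ω)| * ρ (X ω) {ω' | C ω' = c})
          =ᵐ[P] fun ω => (‖p' ω * w (X ω)‖₊ : ENNReal) := by
        filter_upwards [hpρ] with ω h3
        rw [← h3, aux_nnnorm_toReal_mul _ (measure_ne_top _ _)]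
      rw [lintegral_congr_ae houter]
      exact hpw_int.hasFiniteIntegral
  have hwC_int : Integrable ((fun ω => w (X ω)) * indC) P := by
    refine hindCw_int.congr (Filter.Eventually.of_forall fun ω => ?_)
    show indC ω * w (X ω) = w (X ω) * indC ω
    ring
  have hmulW := condExp_mul_of_stronglyMeasurable_left (μ := P) hwX_sm₁ hwC_int hindC_int
  have hcondwC : P[((fun ω => w (X ω)) * indC) | MeasurableSpace.comap X inferInstance]
      =ᵐ[P] fun ω => w (X ω) * p' ω := by
    refine hmulW.trans ?_
    rw [hp'def]
    exact Filter.EventuallyEq.rfl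
  have hD : ∫ ω, p' ω * w (X ω) ∂P = ∫ ω, indC ω * w (X ω) ∂P := by
    calc ∫ ω, p' ω * w (X ω) ∂P = ∫ ω, w (X ω) * p' ω ∂P := by
          congr 1; ext ω; ring
      _ = ∫ ω, w (X ω) * indC ω ∂P := by
          have e5 := integral_condExp (μ := P) (f := (fun ω => w (X ω)) * indC) hm₁
          have e6 := integral_congr_ae hcondwC
          rw [e5] at e6
          exact e6.symm
      _ = ∫ ω, indC ω * w (X ω) ∂P := by congr 1; ext ω; ring
  -- right-hand side
  have hPsne : P {ω | C ω = c} ≠ 0 := (hCpos c).ne'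
  have hPsnt : P {ω | C ω = c} ≠ ⊤ := measure_ne_top _ _
  have hRHS : (P {ω | C ω = c}).toReal * ∫ ω, h (X ω) a ∂(P[|{ω | C ω = c}])
      = ∫ ω, indC ω * w (X ω) ∂P := by
    rw [ProbabilityTheory.cond, integral_smul_measure, smul_eq_mul, ← mul_assoc,
      ENNReal.toReal_inv, mul_inv_cancel₀ (ENNReal.toReal_ne_zero.mpr ⟨hPsne, hPsnt⟩), one_mul]
    have h1 : ∫ ω in {ω | C ω = c}, h (X ω) a ∂P = ∫ ω in {ω | C ω = c}, w (X ω) ∂P :=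
      integral_congr_ae (ae_restrict_of_ae hw_eq)
    rw [h1]
    rw [← integral_indicator hsC]
    refine integral_congr_ae (Filter.Eventually.of_forall fun ω => ?_)
    show {ω' | C ω' = c}.indicator (fun ω => w (X ω)) ω = indC ω * w (X ω)
    rw [hindCdef]
    by_cases hc' : C ω = c
    · rw [Set.indicator_of_mem (show ω ∈ {ω' | C ω' = c} from hc'),
        Set.indicator_of_mem (show ω ∈ {ω' | C ω' = c} from hc'), one_mul]
    · rw [Set.indicator_of_notMem (show ω ∉ {ω' | C ω' = c} from hc'),
        Set.indicator_of_notMem (show ω ∉ {ω' | C ω' = c} from hc'), zero_mul]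
  -- final assembly
  have hT2_int : Integrable (fun ω => indC ω * gs (X ω)) P := by
    refine hgsindC_int.congr (Filter.Eventually.of_forall fun ω => ?_)
    show gs (X ω) * indC ω = indC ω * gs (X ω)
    ring
  rw [integral_add hint hT2_int, hRHS, hT1, hT2, ← hD,
    ← integral_add hpw_gs_int hgsp'_int]
  refine integral_congr_ae (Filter.Eventually.of_forall fun ω => ?_)
  show p' ω * (w (X ω) - gs (X ω)) + gs (X ω) * p' ω = p' ω * w (X ω)
  ring
end

section
/- Let p*, e* : S → [0, ∞) be measurable functions with e*(X) > 0 almost surely and p*(X)/e*(X) bounded. Then E[ 1{A = a} · (p*(X)/e*(X)) · (Y − h_a(X)) ] = 0, and consequently E[ 1{A = a} · (p*(X)/e*(X)) · (Y − h_a(X)) + 1{C = c} · h_a(X) ] = P[C = c] · ψ(c, a); that is, when the outcome model is correctly specified, the asymptotic limit of the augmented estimator for ψ(c, a) equals ψ(c, a) regardless of misspecification of the participation and treatment models. -/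
open MeasureTheory ProbabilityTheory

/-- Let `p*, e* : S → [0, ∞)` be measurable with `e*(X) > 0` almost
surely and `p*(X)/e*(X)` bounded. Then
`E[ 1{A = a} (p*(X)/e*(X)) (Y − h_a(X)) ] = 0`, and consequently
`E[ 1{A = a} (p*(X)/e*(X)) (Y − h_a(X)) + 1{C = c} h_a(X) ] = P[C = c] · ψ(c, a)`;
when the outcome model is correctly specified, the asymptotic limit of the augmented
estimator for `ψ(c, a)` equals `ψ(c, a)` regardless of misspecification of the
participation and treatment models. -/
theorem augmented_estimator_psi_robust_to_weight_model_misspecification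
    {Ω S 𝒜 : Type*} [MeasurableSpace Ω] [StandardBorelSpace Ω] [Nonempty Ω]
    [MeasurableSpace S] [StandardBorelSpace S]
    [MeasurableSpace 𝒜] [MeasurableSingletonClass 𝒜] [Fintype 𝒜]
    {m : ℕ}
    (P : Measure Ω) [IsProbabilityMeasure P]
    (X : Ω → S) (C : Ω → Fin m) (A : Ω → 𝒜) (Y : Ω → ℝ)
    (hX : Measurable X) (hC : Measurable C) (hA : Measurable A)
    (hY : Integrable Y P)
    (hCpos : ∀ c' : Fin m, 0 < P {ω | C ω = c'})
    -- fixed center and treatment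
    (c : Fin m) (a : 𝒜)
    -- h a x is a version of E[Y | X = x, A = a], with h_a(X) integrable
    (h : S → 𝒜 → ℝ)
    (hh : (fun ω => h (X ω) (A ω))
        =ᵐ[P] P[Y | MeasurableSpace.comap (fun ω => (X ω, A ω)) inferInstance])
    (hhint : Integrable (fun ω => h (X ω) a) P)
    -- possibly misspecified participation and treatment model limits
    (ps es : S → ℝ)
    (hps_meas : Measurable ps) (hes_meas : Measurable es)
    (hps_nonneg : ∀ x, 0 ≤ ps x) (hes_nonneg : ∀ x, 0 ≤ es x)
    (hes_pos : ∀ᵐ ω ∂P, 0 < es (X ω))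
    (hratio_bdd : ∃ M : ℝ, ∀ x : S, ps x / es x ≤ M) :
    ∫ ω, ({ω' | A ω' = a}.indicator (fun _ => (1 : ℝ)) ω)
          * (ps (X ω) / es (X ω)) * (Y ω - h (X ω) a) ∂P = 0 ∧
    ∫ ω, (({ω' | A ω' = a}.indicator (fun _ => (1 : ℝ)) ω)
            * (ps (X ω) / es (X ω)) * (Y ω - h (X ω) a)
          + ({ω' | C ω' = c}.indicator (fun _ => (1 : ℝ)) ω) * h (X ω) a) ∂P
      = (P {ω | C ω = c}).toReal * ∫ ω, h (X ω) a ∂(P[|{ω | C ω = c}]) := by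
  classical
  obtain ⟨M, hM⟩ := hratio_bdd
  have hXA : Measurable (fun ω => (X ω, A ω)) := hX.prodMk hA
  have hm : MeasurableSpace.comap (fun ω => (X ω, A ω)) inferInstance
      ≤ ‹MeasurableSpace Ω› := hXA.comap_le
  set g : Ω → ℝ :=
    fun ω => ({ω' | A ω' = a}.indicator (fun _ => (1 : ℝ)) ω) * (ps (X ω) / es (X ω))
    with hgdef
  have hG : Measurable (fun p : S × 𝒜 =>
      (({a} : Set 𝒜).indicator (fun _ => (1 : ℝ)) p.2) * (ps p.1 / es p.1)) :=
    ((measurable_const.indicator (measurableSet_singleton a)).comp measurable_snd).mul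
      ((hps_meas.comp measurable_fst).div (hes_meas.comp measurable_fst))
  have heq : g = (fun p : S × 𝒜 =>
      (({a} : Set 𝒜).indicator (fun _ => (1 : ℝ)) p.2) * (ps p.1 / es p.1))
        ∘ (fun ω => (X ω, A ω)) := by
    funext ω
    simp [hgdef, Set.indicator_apply, Set.mem_setOf_eq, Function.comp]
  have hgm0 : Measurable[MeasurableSpace.comap (fun ω => (X ω, A ω)) inferInstance] g := by
    rw [heq]
    exact hG.comp (Measurable.of_comap_le le_rfl)
  have hg_meas : Measurable g := by rw [heq]; exact hG.comp hXA
  have hg_nonneg : ∀ ω, 0 ≤ g ω := fun ω =>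
    mul_nonneg (Set.indicator_nonneg (fun _ _ => zero_le_one) ω)
      (div_nonneg (hps_nonneg _) (hes_nonneg _))
  have hg_bound : ∀ ω, ‖g ω‖ ≤ max M 0 := by
    intro ω
    rw [Real.norm_of_nonneg (hg_nonneg ω)]
    by_cases hω : A ω = a
    · have : g ω = ps (X ω) / es (X ω) := by
        simp [hgdef, Set.indicator_apply, Set.mem_setOf_eq, hω]
      rw [this]
      exact le_max_of_le_left (hM _)
    · have : g ω = 0 := by
        simp [hgdef, Set.indicator_apply, Set.mem_setOf_eq, hω]
      rw [this]
      exact le_max_right _ _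
  have hgY : Integrable (fun ω => g ω * Y ω) P :=
    hY.bdd_mul hg_meas.aestronglyMeasurable (ae_of_all _ hg_bound)
  have hgh : Integrable (fun ω => g ω * h (X ω) a) P :=
    hhint.bdd_mul hg_meas.aestronglyMeasurable (ae_of_all _ hg_bound)
  have hmul := condExp_stronglyMeasurable_mul_of_bound hm hgm0.stronglyMeasurable hY (max M 0)
      (ae_of_all _ hg_bound)
  have key : ∫ ω, g ω * Y ω ∂P = ∫ ω, g ω * h (X ω) a ∂P := by
    calc ∫ ω, g ω * Y ω ∂P
        = ∫ ω, (P[g * Y | MeasurableSpace.comap (fun ω => (X ω, A ω)) inferInstance]) ω ∂P :=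
          (integral_condExp hm).symm
      _ = ∫ ω, g ω * (P[Y | MeasurableSpace.comap (fun ω => (X ω, A ω)) inferInstance]) ω ∂P :=
          integral_congr_ae hmul
      _ = ∫ ω, g ω * h (X ω) (A ω) ∂P := by
          refine integral_congr_ae ?_
          filter_upwards [hh] with ω hω
          rw [hω]
      _ = ∫ ω, g ω * h (X ω) a ∂P := by
          refine integral_congr_ae (ae_of_all _ fun ω => ?_)
          show g ω * h (X ω) (A ω) = g ω * h (X ω) a
          by_cases hω : A ω = a
          · rw [hω]
          · have : g ω = 0 := by
              simp [hgdef, Set.indicator_apply, Set.mem_setOf_eq, hω]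
            rw [this, zero_mul, zero_mul]
  have hring : ∀ ω, ({ω' | A ω' = a}.indicator (fun _ => (1 : ℝ)) ω)
      * (ps (X ω) / es (X ω)) * (Y ω - h (X ω) a)
      = g ω * Y ω - g ω * h (X ω) a := fun ω => by rw [hgdef]; ring
  have first : ∫ ω, ({ω' | A ω' = a}.indicator (fun _ => (1 : ℝ)) ω)
      * (ps (X ω) / es (X ω)) * (Y ω - h (X ω) a) ∂P = 0 := by
    simp_rw [hring]
    rw [integral_sub hgY hgh, key, sub_self]
  refine ⟨first, ?_⟩
  have hfirst_int : Integrable (fun ω => ({ω' | A ω' = a}.indicator (fun _ => (1 : ℝ)) ω)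
      * (ps (X ω) / es (X ω)) * (Y ω - h (X ω) a)) P := by
    simp_rw [hring]
    exact hgY.sub hgh
  have hsC : MeasurableSet {ω | C ω = c} := hC (measurableSet_singleton c)
  have hCind : Integrable (fun ω => ({ω' | C ω' = c}.indicator (fun _ => (1 : ℝ)) ω)
      * h (X ω) a) P := by
    refine hhint.bdd_mul (measurable_const.indicator hsC).aestronglyMeasurable
      (c := 1) (ae_of_all _ fun ω => ?_)
    rw [Real.norm_eq_abs]
    rcases Set.indicator_eq_zero_or_self {ω' | C ω' = c} (fun _ => (1 : ℝ)) ω with h' | h' <;>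
      simp [h']
  rw [integral_add hfirst_int hCind, first, zero_add]
  have hind : ∀ ω, ({ω' | C ω' = c}.indicator (fun _ => (1 : ℝ)) ω) * h (X ω) a
      = {ω' | C ω' = c}.indicator (fun ω => h (X ω) a) ω := by
    intro ω
    by_cases hω : C ω = c <;> simp [Set.indicator_apply, Set.mem_setOf_eq, hω]
  simp_rw [hind]
  rw [integral_indicator hsC, ProbabilityTheory.cond, integral_smul_measure,
    ENNReal.toReal_inv, smul_eq_mul, ← mul_assoc,
    mul_inv_cancel₀ (ENNReal.toReal_ne_zero.mpr ⟨(hCpos c).ne', measure_ne_top P _⟩), one_mul]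
end

section
/- Assume e_a(X) = P[A = a | X] > 0 almost surely and suitable integrability. Define the influence function Ψ¹(c, a) = P[C = c]^{-1} · { 1{A = a} · p_c(X) · e_a(X)^{-1} · (Y − h_a(X)) + 1{C = c} · (h_a(X) − ψ(c, a)) }. Then E[Ψ¹(c, a)] = 0; moreover, the first summand 1{A = a} · p_c(X) · e_a(X)^{-1} · (Y − h_a(X)) has conditional expectation zero given σ(X, A) almost surely, and the second summand h_a(X) − ψ(c, a) has conditional expectation zero given the event {C = c}. -/
open MeasureTheory ProbabilityTheory

/-- Assume `e_a(X) = P[A = a | X] > 0` almost surely and suitable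
integrability. The influence function
`Ψ¹(c, a) = P[C = c]⁻¹ { 1{A = a} p_c(X) e_a(X)⁻¹ (Y − h_a(X))
+ 1{C = c} (h_a(X) − ψ(c, a)) }` has mean zero; moreover its first summand has
conditional expectation zero given `σ(X, A)` almost surely, and its second summand
has conditional expectation zero given the event `{C = c}`. -/
theorem influence_function_psi_mean_zero
    {Ω S 𝒜 : Type*} [MeasurableSpace Ω] [StandardBorelSpace Ω] [Nonempty Ω]
    [MeasurableSpace S] [StandardBorelSpace S]
    [MeasurableSpace 𝒜] [MeasurableSingletonClass 𝒜] [Fintype 𝒜]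
    {m : ℕ}
    (P : Measure Ω) [IsProbabilityMeasure P]
    (X : Ω → S) (C : Ω → Fin m) (A : Ω → 𝒜) (Y : Ω → ℝ)
    (hX : Measurable X) (hC : Measurable C) (hA : Measurable A)
    (hY : Integrable Y P)
    (hCpos : ∀ c' : Fin m, 0 < P {ω | C ω = c'})
    -- fixed center and treatment
    (c : Fin m) (a : 𝒜)
    -- h a x is a version of E[Y | X = x, A = a]
    (h : S → 𝒜 → ℝ)
    (hh : (fun ω => h (X ω) (A ω))
        =ᵐ[P] P[Y | MeasurableSpace.comap (fun ω => (X ω, A ω)) inferInstance])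
    -- e x is a version of P[A = a | X = x]
    (e : S → ℝ)
    (he : (fun ω => e (X ω))
        =ᵐ[P] P[({ω' | A ω' = a}.indicator (fun _ => (1 : ℝ))) |
            MeasurableSpace.comap X inferInstance])
    (hepos : ∀ᵐ ω ∂P, 0 < e (X ω))
    -- p x is a version of P[C = c | X = x]
    (p : S → ℝ)
    (hp : (fun ω => p (X ω))
        =ᵐ[P] P[({ω' | C ω' = c}.indicator (fun _ => (1 : ℝ))) |
            MeasurableSpace.comap X inferInstance])
    -- suitable integrability
    (hhint : Integrable (fun ω => h (X ω) a) P)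
    (hint : Integrable (fun ω =>
        ({ω' | A ω' = a}.indicator (fun _ => (1 : ℝ)) ω)
          * p (X ω) * (e (X ω))⁻¹ * (Y ω - h (X ω) a)) P)
    -- ψ(c, a) = E[ h_a(X) | C = c ]
    (ψ : ℝ) (hψ : ψ = ∫ ω, h (X ω) a ∂(P[|{ω | C ω = c}])) :
    -- E[Ψ¹(c, a)] = 0
    ∫ ω, ((P {ω' | C ω' = c}).toReal)⁻¹
          * (({ω' | A ω' = a}.indicator (fun _ => (1 : ℝ)) ω)
                * p (X ω) * (e (X ω))⁻¹ * (Y ω - h (X ω) a)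
              + ({ω' | C ω' = c}.indicator (fun _ => (1 : ℝ)) ω)
                * (h (X ω) a - ψ)) ∂P = 0 ∧
    -- the first summand has conditional expectation zero given σ(X, A)
    (P[(fun ω => ({ω' | A ω' = a}.indicator (fun _ => (1 : ℝ)) ω)
          * p (X ω) * (e (X ω))⁻¹ * (Y ω - h (X ω) a)) |
        MeasurableSpace.comap (fun ω => (X ω, A ω)) inferInstance]
      =ᵐ[P] 0) ∧
    -- the second summand has conditional expectation zero given the event {C = c}
    ∫ ω, (h (X ω) a - ψ) ∂(P[|{ω | C ω = c}]) = 0 := by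
  classical
  -- ===== part 3: the event {C = c} =====
  set s : Set Ω := {ω | C ω = c} with hsdef
  have hs : MeasurableSet s := hC (measurableSet_singleton c)
  have hs0 : P s ≠ 0 := (hCpos c).ne'
  haveI : IsProbabilityMeasure (P[|s]) := cond_isProbabilityMeasure hs0
  have hcondmeas : P[|s] = (P s)⁻¹ • P.restrict s := rfl
  have hhint' : Integrable (fun ω => h (X ω) a) (P[|s]) := by
    rw [hcondmeas]
    exact (hhint.restrict).smul_measure (ENNReal.inv_ne_top.mpr hs0)
  have claim3 : ∫ ω, (h (X ω) a - ψ) ∂(P[|s]) = 0 := by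
    rw [integral_sub hhint' (integrable_const ψ), integral_const]
    simp [hψ]
  have hSeceq : (fun ω => ({ω' | C ω' = c}.indicator (fun _ => (1 : ℝ)) ω)
        * (h (X ω) a - ψ)) = s.indicator (fun ω => h (X ω) a - ψ) := by
    funext ω
    by_cases hω : ω ∈ s
    · rw [Set.indicator_of_mem hω, Set.indicator_of_mem hω, one_mul]
    · rw [Set.indicator_of_notMem hω, Set.indicator_of_notMem hω, zero_mul]
  have hSecint : Integrable (fun ω => ({ω' | C ω' = c}.indicator (fun _ => (1 : ℝ)) ω)
        * (h (X ω) a - ψ)) P := by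
    rw [hSeceq]
    exact (hhint.sub (integrable_const ψ)).indicator hs
  have hSzero : ∫ ω, ({ω' | C ω' = c}.indicator (fun _ => (1 : ℝ)) ω)
      * (h (X ω) a - ψ) ∂P = 0 := by
    rw [hSeceq, integral_indicator hs]
    have hkey : (0 : ℝ) = ((P s)⁻¹).toReal • ∫ ω in s, (h (X ω) a - ψ) ∂P := by
      rw [← claim3, hcondmeas, integral_smul_measure]
    have hne : ((P s)⁻¹).toReal ≠ 0 := by
      rw [ENNReal.toReal_inv]
      exact inv_ne_zero (ENNReal.toReal_ne_zero.mpr ⟨hs0, measure_ne_top P s⟩)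
    rcases smul_eq_zero.mp hkey.symm with h0 | h0
    · exact absurd h0 hne
    · exact h0
  -- ===== part 2: conditional expectation given σ(X, A) =====
  have hmXA : MeasurableSpace.comap (fun ω => (X ω, A ω)) inferInstance ≤
      ‹MeasurableSpace Ω› := (hX.prodMk hA).comap_le
  set mXA := MeasurableSpace.comap (fun ω => (X ω, A ω)) inferInstance with hmXAdef
  have hsub : MeasurableSpace.comap X inferInstance ≤ mXA := by
    rintro u ⟨t, ht, rfl⟩
    exact ⟨t ×ˢ Set.univ, ht.prod MeasurableSet.univ, by ext ω; simp⟩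
  set p' : Ω → ℝ := P[({ω' | C ω' = c}.indicator (fun _ => (1 : ℝ))) |
      MeasurableSpace.comap X inferInstance] with hp'def
  set e' : Ω → ℝ := P[({ω' | A ω' = a}.indicator (fun _ => (1 : ℝ))) |
      MeasurableSpace.comap X inferInstance] with he'def
  set hcond : Ω → ℝ := P[Y | mXA] with hconddef
  have hindset : MeasurableSet[mXA] {ω' | A ω' = a} := by
    refine ⟨Set.univ ×ˢ {a}, MeasurableSet.univ.prod (measurableSet_singleton a), ?_⟩
    ext ω; simp [eq_comm]
  set f' : Ω → ℝ := fun ω =>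
    ({ω' | A ω' = a}.indicator (fun _ => (1 : ℝ)) ω) * p' ω * (e' ω)⁻¹ with hf'def
  have hf'sm : StronglyMeasurable[mXA] f' := by
    have h1 : Measurable[mXA] fun ω => ({ω' | A ω' = a}.indicator (fun _ => (1 : ℝ)) ω) :=
      (@measurable_const ℝ Ω _ mXA 1).indicator hindset
    have h2 : Measurable[mXA] p' := (stronglyMeasurable_condExp.mono hsub).measurable
    have h3 : Measurable[mXA] e' := (stronglyMeasurable_condExp.mono hsub).measurable
    exact ((h1.mul h2).mul h3.inv).stronglyMeasurable
  set g : Ω → ℝ := fun ω => Y ω - hcond ω with hgdef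
  have hgint : Integrable g P := hY.sub integrable_condExp
  have heq : (fun ω => ({ω' | A ω' = a}.indicator (fun _ => (1 : ℝ)) ω)
        * p (X ω) * (e (X ω))⁻¹ * (Y ω - h (X ω) a)) =ᵐ[P] f' * g := by
    filter_upwards [hh, he, hp] with ω hhω heω hpω
    simp only [Pi.mul_apply, hf'def, hgdef]
    rw [← hpω, ← heω]
    by_cases hAω : A ω = a
    · rw [hAω] at hhω
      rw [hhω]
    · simp only [Set.indicator_apply, Set.mem_setOf_eq, if_neg hAω, zero_mul]
  have hFgint : Integrable (f' * g) P := hint.congr heq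
  have hgzero : P[g | mXA] =ᵐ[P] 0 := by
    have h1 : P[g | mXA] =ᵐ[P] P[Y | mXA] - P[hcond | mXA] := condExp_sub hY integrable_condExp mXA
    have h2 : P[hcond | mXA] =ᵐ[P] hcond := condExp_condExp_of_le le_rfl hmXA
    filter_upwards [h1, h2] with ω h1ω h2ω
    rw [Pi.zero_apply, h1ω, Pi.sub_apply, h2ω, sub_self]
  have claim2 : P[(fun ω => ({ω' | A ω' = a}.indicator (fun _ => (1 : ℝ)) ω)
        * p (X ω) * (e (X ω))⁻¹ * (Y ω - h (X ω) a)) | mXA] =ᵐ[P] 0 := by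
    have hmul := condExp_mul_of_stronglyMeasurable_left hf'sm hFgint hgint
    refine (condExp_congr_ae heq).trans (hmul.trans ?_)
    filter_upwards [hgzero] with ω hω
    simp only [Pi.mul_apply, hω, Pi.zero_apply, mul_zero]
  -- ===== part 1: mean zero =====
  have hFzero : ∫ ω, ({ω' | A ω' = a}.indicator (fun _ => (1 : ℝ)) ω)
      * p (X ω) * (e (X ω))⁻¹ * (Y ω - h (X ω) a) ∂P = 0 := by
    haveI : SigmaFinite (P.trim hmXA) := inferInstance
    rw [← integral_condExp hmXA (f := fun ω => ({ω' | A ω' = a}.indicator (fun _ => (1 : ℝ)) ω)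
      * p (X ω) * (e (X ω))⁻¹ * (Y ω - h (X ω) a)), integral_congr_ae claim2]
    simp
  refine ⟨?_, claim2, claim3⟩
  rw [integral_const_mul, integral_add hint hSecint, hFzero, hSzero]
  simp
end
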